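/- arXiv:1809.07382 — 4 statements merged into one kernel-verified Lean document; each statement's English description precedes it below -/
import Mathlib

section
/- No r-regular graph with r odd admits a distance magic labeling, i.e., there is no bijection f from the vertices to {1,...,n} such that the sum of labels over the neighborhood of each vertex is a constant. -/
open scoped Classical
open Finset

/-- Weight of a vertex: sum of labels over its open neighborhood. -/
noncomputable def wsum {V : Type*} [Fintype V] (G : SimpleGraph V) (f : V → ℕ) (u : V) : ℕ :=
  ∑ v ∈ Finset.univ.filter (fun v => G.Adj u v), f v

/-- A graph is distance magic if some bijective labeling by 1,...,n has constant weights. -/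
def IsDistanceMagic {V : Type*} [Fintype V] (G : SimpleGraph V) : Prop :=
  ∃ (f : V ≃ Fin (Fintype.card V)) (c : ℕ),
    ∀ u, wsum G (fun v => (f v : ℕ) + 1) u = c

/-- `G` is `r`-regular. -/
def IsRegularDeg {V : Type*} [Fintype V] (G : SimpleGraph V) (r : ℕ) : Prop :=
  ∀ u : V, (Finset.univ.filter (fun v => G.Adj u v)).card = r

/-- `(a,d)`-distance antimagic: some bijective labeling by 1,...,n has weight set
`{a, a+d, ..., a+(n-1)d}`. -/
def IsDistAntimagic {V : Type*} [Fintype V] (G : SimpleGraph V) (a d : ℕ) : Prop :=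
  ∃ f : V ≃ Fin (Fintype.card V),
    Finset.image (fun u => wsum G (fun v => (f v : ℕ) + 1) u) Finset.univ
      = Finset.image (fun i : Fin (Fintype.card V) => a + (i : ℕ) * d) Finset.univ

/-- Circulant graph on `N` vertices with jumps `1,...,m` (so `H_{2m,N} = C_N^m`). -/
def circulant (N m : ℕ) : SimpleGraph (Fin N) :=
  SimpleGraph.fromRel (fun i j => ∃ k, 1 ≤ k ∧ k ≤ m ∧ ((i : ℕ) + k) % N = (j : ℕ))

/-- The graph `(K_{n-1} - M) + K_1`: vertex `0` joined to all, and vertices `1,...,n-1`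
forming a complete graph minus the perfect matching pairing `i` with `i + (n-1)/2 (mod n-1)`. -/
def calG (n : ℕ) : SimpleGraph (Fin n) :=
  SimpleGraph.fromRel (fun i j =>
    (i : ℕ) = 0 ∨ (j : ℕ) = 0 ∨
      ¬ (((i : ℕ) - 1 + (n - 1) / 2) % (n - 1) = (j : ℕ) - 1))

/-- Lexicographic product `G ∘ H`. -/
def lexProd {α β : Type*} (G : SimpleGraph α) (H : SimpleGraph β) : SimpleGraph (α × β) where
  Adj x y := G.Adj x.1 y.1 ∨ (x.1 = y.1 ∧ H.Adj x.2 y.2)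
  symm := ⟨by
    rintro ⟨a, b⟩ ⟨c, d⟩ (h | ⟨h1, h2⟩)
    · exact Or.inl h.symm
    · exact Or.inr ⟨h1.symm, h2.symm⟩⟩
  loopless := ⟨by
    rintro ⟨a, b⟩ (h | ⟨-, h⟩)
    · exact G.irrefl h
    · exact H.irrefl h⟩

/-- Direct (tensor) product `G × H`. -/
def tensorProd {α β : Type*} (G : SimpleGraph α) (H : SimpleGraph β) : SimpleGraph (α × β) where
  Adj x y := G.Adj x.1 y.1 ∧ H.Adj x.2 y.2
  symm := ⟨fun _ _ h => ⟨h.1.symm, h.2.symm⟩⟩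
  loopless := ⟨fun x h => G.irrefl h.1⟩

/-- The Harary graph `H_{3,n}`. -/
noncomputable def harary3 (n : ℕ) : SimpleGraph (Fin n) :=
  circulant n 1 ⊔ SimpleGraph.fromRel (fun i j =>
    if n % 2 = 0 then
      ∃ k, 1 ≤ k ∧ k ≤ n / 2 ∧ (i : ℕ) = k ∧ (j : ℕ) = (k + n / 2) % n
    else
      ((i : ℕ) = 0 ∧ ((j : ℕ) = (n - 1) / 2 ∨ (j : ℕ) = (n + 1) / 2)) ∨
      (∃ k, 1 ≤ k ∧ k < (n - 1) / 2 ∧ (i : ℕ) = k ∧ (j : ℕ) = (k + (n + 1) / 2) % n))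

/-- The Harary graph `H_{2n+1,2n+3}`: `C_{2n+3}^n` together with edges `v_0 v_{n+1}`,
`v_0 v_{n+2}` and `v_i v_{i+n+2}` for `1 ≤ i < n+1`. -/
def hararyOdd (n : ℕ) : SimpleGraph (Fin (2 * n + 3)) :=
  circulant (2 * n + 3) n ⊔ SimpleGraph.fromRel (fun i j =>
    ((i : ℕ) = 0 ∧ ((j : ℕ) = n + 1 ∨ (j : ℕ) = n + 2)) ∨
    (∃ k, 1 ≤ k ∧ k < n + 1 ∧ (i : ℕ) = k ∧ (j : ℕ) = k + n + 2))

/-- The Harary graph `H_{4n+1,4n+4}`: circulant with jumps `1,...,2n` and `2n+2`. -/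
def harary41 (n : ℕ) : SimpleGraph (Fin (4 * n + 4)) :=
  SimpleGraph.fromRel (fun i j =>
    ∃ k, ((1 ≤ k ∧ k ≤ 2 * n) ∨ k = 2 * n + 2) ∧ ((i : ℕ) + k) % (4 * n + 4) = (j : ℕ))

/-- The join `G + K_1`. -/
def joinK1 {V : Type*} (G : SimpleGraph V) : SimpleGraph (V ⊕ Unit) :=
  SimpleGraph.fromRel (fun x y =>
    match x, y with
    | Sum.inl a, Sum.inl b => G.Adj a b
    | Sum.inl _, Sum.inr _ => True
    | Sum.inr _, _ => False)

/-- No r-regular graph with r odd is distance magic. -/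
theorem no_odd_regular_distance_magic {V : Type*} [Fintype V] [Nonempty V]
    (G : SimpleGraph V) (r : ℕ) (hr : Odd r) (hreg : IsRegularDeg G r) :
    ¬ IsDistanceMagic G := by
  rintro ⟨f, c, hc⟩
  have hn : ∀ (_ : True), True := fun _ => trivial
  -- sum of all weights equals r times the sum of labels
  have key : ∑ u : V, wsum G (fun v => (f v : ℕ) + 1) u
      = r * ∑ v : V, ((f v : ℕ) + 1) := by
    unfold wsum
    have h1 : ∀ u : V, ∑ v ∈ Finset.univ.filter (fun v => G.Adj u v), ((f v : ℕ) + 1)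
        = ∑ v : V, if G.Adj u v then ((f v : ℕ) + 1) else 0 := by
      intro u; rw [Finset.sum_filter]
    simp_rw [h1]
    rw [Finset.sum_comm]
    have h2 : ∀ v : V, (∑ u : V, if G.Adj u v then ((f v : ℕ) + 1) else 0)
        = r * ((f v : ℕ) + 1) := by
      intro v
      rw [← Finset.sum_filter, Finset.sum_const, smul_eq_mul]
      congr 1
      have h3 : (Finset.univ.filter (fun u => G.Adj u v))
          = (Finset.univ.filter (fun u => G.Adj v u)) := by
        apply Finset.filter_congr
        intro u _
        simp [G.adj_comm]
      rw [h3, hreg v]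
    simp_rw [h2]
    rw [← Finset.mul_sum]
  -- sum of labels is 1 + 2 + ... + n
  have hsum2 : (∑ v : V, ((f v : ℕ) + 1)) * 2 = Fintype.card V * (Fintype.card V + 1) := by
    have h1 : ∑ v : V, ((f v : ℕ) + 1) = ∑ i : Fin (Fintype.card V), ((i : ℕ) + 1) :=
      Equiv.sum_comp f (fun i : Fin (Fintype.card V) => (i : ℕ) + 1)
    have h2 : ∀ N : ℕ, (∑ i ∈ Finset.range N, (i + 1)) * 2 = N * (N + 1) := by
      intro N
      induction N with
      | zero => simp
      | succ k ih => rw [Finset.sum_range_succ, add_mul, ih]; ring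
    rw [h1, Fin.sum_univ_eq_sum_range (fun i => i + 1) (Fintype.card V), h2]
  -- total weight is n * c
  have htot : (∑ u : V, wsum G (fun v => (f v : ℕ) + 1) u) = Fintype.card V * c := by
    simp_rw [hc]
    rw [Finset.sum_const, smul_eq_mul, Finset.card_univ]
  -- handshake: n * r is even
  have hhs : Even (Fintype.card V * r) := by
    have hse := SimpleGraph.sum_degrees_eq_twice_card_edges G
    have hdeg : ∀ u : V, G.degree u = r := by
      intro u
      rw [← hreg u, SimpleGraph.degree]
      congr 1
      ext v
      simp [SimpleGraph.mem_neighborFinset]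
    simp_rw [hdeg, Finset.sum_const, smul_eq_mul, Finset.card_univ] at hse
    exact ⟨G.edgeFinset.card, by omega⟩
  have hnpos : 0 < Fintype.card V := Fintype.card_pos
  obtain ⟨a, ha⟩ := id hr
  have hneven : Even (Fintype.card V) := by
    rcases Nat.even_mul.mp hhs with h | h
    · exact h
    · exact absurd h (by simp [ha, Nat.even_add_one, parity_simps])
  obtain ⟨m, hm⟩ := hneven
  have heq : Fintype.card V * c * 2 = r * (Fintype.card V * (Fintype.card V + 1)) := by
    rw [← hsum2, ← htot, key]; ring
  have hmpos : 0 < m := by omega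
  have h2c : 2 * c = r * (Fintype.card V + 1) := by
    have h2 : (m + m) * (c * 2) = (m + m) * (r * (Fintype.card V + 1)) := by
      rw [← hm]; nlinarith [heq]
    have := Nat.eq_of_mul_eq_mul_left (by omega : 0 < m + m) h2
    omega
  have hodd : Odd (r * (Fintype.card V + 1)) := hr.mul ⟨m, by omega⟩
  obtain ⟨b, hb⟩ := hodd
  omega
end

section
/- The graph H_{2n+1,2n+3} is distance magic with magic constant 2n² + 5n + 3, witnessed by the labeling f(v_i) = 2n+3−i for 0 ≤ i ≤ n+1 and f(v_i) = i−(n+1) for n+2 ≤ i ≤ 2n+2. -/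
open scoped Classical
open Finset

lemma circK (n a b : ℕ) (ha : a < 2*n+3) (hb : b < 2*n+3) :
    (∃ k, 1 ≤ k ∧ k ≤ n ∧ (a + k) % (2*n+3) = b) ↔
      ((a < b ∧ b ≤ a + n) ∨ b + n + 3 ≤ a) := by
  constructor
  · rintro ⟨k, hk1, hk2, hm⟩
    rcases Nat.lt_or_ge (a+k) (2*n+3) with h | h
    · rw [Nat.mod_eq_of_lt h] at hm; omega
    · rw [Nat.mod_eq_sub_mod h, Nat.mod_eq_of_lt (by omega)] at hm; omega
  · rintro (⟨h1,h2⟩ | h)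
    · exact ⟨b-a, by omega, by omega, by rw [show a+(b-a)=b by omega, Nat.mod_eq_of_lt hb]⟩
    · refine ⟨b+(2*n+3)-a, by omega, by omega, ?_⟩
      rw [show a+(b+(2*n+3)-a) = b+(2*n+3) by omega, Nat.add_mod_right, Nat.mod_eq_of_lt hb]

lemma extraE (n a b : ℕ) :
    (∃ k, 1 ≤ k ∧ k < n+1 ∧ a = k ∧ b = k+n+2) ↔ (1 ≤ a ∧ a < n+1 ∧ b = a+n+2) := by
  constructor
  · rintro ⟨k, h1, h2, rfl, rfl⟩; exact ⟨h1, h2, rfl⟩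
  · rintro ⟨h1, h2, h3⟩; exact ⟨a, h1, h2, rfl, h3⟩

/-- The unique "non-neighbor" map: `0 ↦ 0`, `i ↦ i + (n+1)` for `1 ≤ i ≤ n+1`,
`i ↦ i - (n+1)` for `i ≥ n+2`. -/
def sig (n : ℕ) (u : Fin (2*n+3)) : Fin (2*n+3) :=
  if _h : (u:ℕ) = 0 then u
  else if _h2 : (u:ℕ) ≤ n+1 then ⟨(u:ℕ)+n+1, by omega⟩
  else ⟨(u:ℕ)-(n+1), by have := u.isLt; omega⟩

lemma adj_iff (n : ℕ) (u v : Fin (2*n+3)) :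
    (hararyOdd n).Adj u v ↔ v ≠ u ∧ v ≠ sig n u := by
  have hu := u.isLt; have hv := v.isLt
  rw [hararyOdd]
  simp only [SimpleGraph.sup_adj, circulant, SimpleGraph.fromRel_adj]
  rw [circK n u v hu hv, circK n v u hv hu, extraE n u v, extraE n v u]
  simp only [ne_eq, Fin.ext_iff, sig]
  split_ifs <;> (try simp only [Fin.val_mk]) <;> omega

lemma nbhd (n : ℕ) (u : Fin (2*n+3)) :
    (Finset.univ.filter (fun v => (hararyOdd n).Adj u v))
      = (Finset.univ.erase u).erase (sig n u) := by
  ext v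
  simp only [Finset.mem_filter, Finset.mem_univ, true_and, Finset.mem_erase, and_true, adj_iff]
  tauto

lemma sumF (n : ℕ) :
    ∑ v : Fin (2*n+3),
      (if (v:ℕ) ≤ n+1 then 2*n+3 - (v:ℕ) else (v:ℕ) - (n+1)) = 2*n^2+7*n+6 := by
  rw [Fin.sum_univ_eq_sum_range (fun i => if i ≤ n+1 then 2*n+3 - i else i - (n+1)) (2*n+3),
    Finset.range_eq_Ico,
    ← Finset.sum_Ico_consecutive _ (show 0 ≤ n+2 by omega) (show n+2 ≤ 2*n+3 by omega)]
  have e1 : ∑ i ∈ Finset.Ico 0 (n+2),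
      (if i ≤ n+1 then 2*n+3 - i else i - (n+1)) = ∑ i ∈ Finset.Ico 0 (n+2), (2*n+3 - i) :=
    Finset.sum_congr rfl (fun i hi => by
      simp only [Finset.mem_Ico] at hi; rw [if_pos (by omega)])
  have e2 : ∑ i ∈ Finset.Ico (n+2) (2*n+3),
      (if i ≤ n+1 then 2*n+3 - i else i - (n+1))
        = ∑ i ∈ Finset.Ico (n+2) (2*n+3), (i - (n+1)) :=
    Finset.sum_congr rfl (fun i hi => by
      simp only [Finset.mem_Ico] at hi; rw [if_neg (by omega)])
  rw [e1, e2]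
  have h1 : (∑ i ∈ Finset.Ico 0 (n+2), (2*n+3 - i)) + ∑ i ∈ Finset.Ico 0 (n+2), i
      = (n+2) * (2*n+3) := by
    rw [← Finset.sum_add_distrib,
      Finset.sum_congr rfl (fun i hi => by
        simp only [Finset.mem_Ico] at hi; omega : ∀ i ∈ Finset.Ico 0 (n+2),
          (2*n+3 - i) + i = 2*n+3),
      Finset.sum_const, Nat.card_Ico, smul_eq_mul]
    simp
  have h2 : (∑ i ∈ Finset.Ico (n+2) (2*n+3), (i - (n+1))) + (n+1) * (n+1)
      = ∑ i ∈ Finset.Ico (n+2) (2*n+3), i := by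
    rw [show (n+1)*(n+1) = (Finset.Ico (n+2) (2*n+3)).card * (n+1) by
        rw [Nat.card_Ico, show 2*n+3-(n+2) = n+1 by omega],
      ← Finset.sum_const_nat (m := n+1) (fun i _ => rfl),
      ← Finset.sum_add_distrib]
    exact Finset.sum_congr rfl (fun i hi => by simp only [Finset.mem_Ico] at hi; omega)
  have h3 : (∑ i ∈ Finset.Ico 0 (n+2), i) + ∑ i ∈ Finset.Ico (n+2) (2*n+3), i
      = ∑ i ∈ Finset.range (2*n+3), i := by
    rw [Finset.range_eq_Ico]
    exact Finset.sum_Ico_consecutive _ (by omega) (by omega)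
  have h4 := Finset.sum_range_id_mul_two (2*n+3)
  have h5 : ∑ i ∈ Finset.Ico 0 (n+2), i = ∑ i ∈ Finset.range (n+2), i := by
    rw [Finset.range_eq_Ico]
  have h6 := Finset.sum_range_id_mul_two (n+2)
  have r1 : (n+2) * (2*n+3) = 2*n^2+7*n+6 := by ring
  have r2 : (2*n+3) * (2*n+3-1) = 4*n^2+10*n+6 := by
    rw [show 2*n+3-1 = 2*n+2 by omega]; ring
  have r3 : (n+2) * (n+2-1) = n^2+3*n+2 := by
    rw [show n+2-1 = n+1 by omega]; ring
  have r4 : (n+1) * (n+1) = n^2+2*n+1 := by ring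
  omega

lemma pairsum (n : ℕ) (u : Fin (2*n+3)) (hu : (u:ℕ) ≠ 0) :
    (if (u:ℕ) ≤ n+1 then 2*n+3 - (u:ℕ) else (u:ℕ) - (n+1))
      + (if ((sig n u : Fin (2*n+3)):ℕ) ≤ n+1 then 2*n+3 - ((sig n u : Fin (2*n+3)):ℕ)
          else ((sig n u : Fin (2*n+3)):ℕ) - (n+1)) = 2*n+3 := by
  have h := u.isLt
  simp only [sig]
  split_ifs <;> (try simp only [Fin.val_mk] at *) <;> omega

/-- H_{2n+1,2n+3} is distance magic with constant 2n^2+5n+3, witnessed by the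
labeling f(v_i) = 2n+3-i for i ≤ n+1 and f(v_i) = i-(n+1) for n+2 ≤ i ≤ 2n+2. -/
theorem hararyOdd_distance_magic (n : ℕ) :
    Set.BijOn (fun i : Fin (2 * n + 3) =>
        if (i : ℕ) ≤ n + 1 then 2 * n + 3 - (i : ℕ) else (i : ℕ) - (n + 1))
      Set.univ (Set.Icc 1 (2 * n + 3)) ∧
    (∀ u, wsum (hararyOdd n)
        (fun i => if (i : ℕ) ≤ n + 1 then 2 * n + 3 - (i : ℕ) else (i : ℕ) - (n + 1)) u
      = 2 * n ^ 2 + 5 * n + 3) := by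
  constructor
  · refine ⟨fun i _ => ?_, fun a _ b _ hab => ?_, fun m hm => ?_⟩
    · have := i.isLt
      simp only [Set.mem_Icc]
      split_ifs <;> omega
    · have ha := a.isLt; have hb := b.isLt
      simp only at hab
      apply Fin.ext
      split_ifs at hab <;> omega
    · simp only [Set.mem_Icc] at hm
      by_cases h : m ≤ n+1
      · refine ⟨⟨m+n+1, by omega⟩, Set.mem_univ _, ?_⟩
        simp only [Fin.val_mk]
        rw [if_neg (by omega)]; omega
      · refine ⟨⟨2*n+3-m, by omega⟩, Set.mem_univ _, ?_⟩
        simp only [Fin.val_mk]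
        rw [if_pos (by omega)]; omega
  · intro u
    rw [wsum, nbhd]
    set f : Fin (2*n+3) → ℕ :=
      fun i => if (i:ℕ) ≤ n+1 then 2*n+3 - (i:ℕ) else (i:ℕ) - (n+1) with hf
    by_cases h0 : (u:ℕ) = 0
    · have hs : sig n u = u := by simp [sig, h0]
      rw [hs, Finset.erase_idem]
      have h1 : (Finset.univ.erase u).sum f + f u = Finset.univ.sum f :=
        Finset.sum_erase_add Finset.univ f (Finset.mem_univ u)
      have h2 : Finset.univ.sum f = 2*n^2+7*n+6 := by
        simpa only [hf] using sumF n
      have h3 : f u = 2*n+3 := by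
        simp only [hf]; rw [if_pos (by omega)]; omega
      have hp : 2*n^2+7*n+6 = (2*n^2+5*n+3) + (2*n+3) := by ring
      linarith
    · have hs : sig n u ≠ u := by
        have := u.isLt
        simp only [sig, ne_eq, Fin.ext_iff]
        split_ifs <;> simp only [Fin.val_mk] <;> omega
      have h1 : ((Finset.univ.erase u).erase (sig n u)).sum f + f (sig n u)
          = (Finset.univ.erase u).sum f :=
        Finset.sum_erase_add (Finset.univ.erase u) f
          (Finset.mem_erase.mpr ⟨hs, Finset.mem_univ _⟩)
      have h2 : (Finset.univ.erase u).sum f + f u = Finset.univ.sum f :=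
        Finset.sum_erase_add Finset.univ f (Finset.mem_univ u)
      have h3 : Finset.univ.sum f = 2*n^2+7*n+6 := by
        simpa only [hf] using sumF n
      have h4 : f u + f (sig n u) = 2*n+3 := by
        simpa only [hf] using pairsum n u h0
      have hp : 2*n^2+7*n+6 = (2*n^2+5*n+3) + (2*n+3) := by ring
      linarith
end

section
/- Let G be a 2n-regular distance magic graph on m vertices containing an induced subgraph H isomorphic to K_{2n} minus a perfect matching, such that under the distance magic labeling f of G the two labels on each removed matching pair of H sum to m+1. Then the graph G† obtained by deleting all edges of H and joining 2n−2 new vertices to all vertices of H is a 2n-regular distance magic graph on m + 2n − 2 vertices, with magic constant 2n² + mn − n under the labeling f†(x) = f(x) + n − 1 for x ∈ V(G) and f†(u_j) = j+1 for 0 ≤ j ≤ n−2, f†(u_j) = m + j + 1 for n−1 ≤ j ≤ 2n−3. -/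
open scoped Classical
open Finset

private lemma gauss' (k : ℕ) : 2 * ∑ i ∈ Finset.range k, (i+1) = k * (k+1) := by
  induction k with
  | zero => simp
  | succ k ih => rw [Finset.sum_range_succ, Nat.mul_add, ih]; ring

private theorem auxmain {V : Type*} [Fintype V] (k m : ℕ)
    (hV : Fintype.card V = m) (G : SimpleGraph V) (hreg : IsRegularDeg G (2 * (k+2)))
    (f : V ≃ Fin (Fintype.card V)) (c : ℕ)
    (hmagic : ∀ u, wsum G (fun v => (f v : ℕ) + 1) u = c)
    (ψ : Fin (2 * (k+2)) → V) (hinj : Function.Injective ψ)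
    (hsub : ∀ i j : Fin (2 * (k+2)), i ≠ j →
      (G.Adj (ψ i) (ψ j) ↔ (i : ℕ) + (j : ℕ) ≠ 2 * (k+2) - 1))
    (htwin : ∀ i j : Fin (2 * (k+2)), (i : ℕ) + (j : ℕ) = 2 * (k+2) - 1 →
      ((f (ψ i) : ℕ) + 1) + ((f (ψ j) : ℕ) + 1) = m + 1)
    (Gd : SimpleGraph (V ⊕ Fin (2 * (k+2) - 2)))
    (hVV : ∀ a b, Gd.Adj (Sum.inl a) (Sum.inl b) ↔
      G.Adj a b ∧ ¬(a ∈ Set.range ψ ∧ b ∈ Set.range ψ))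
    (hVR : ∀ a j, Gd.Adj (Sum.inl a) (Sum.inr j) ↔ a ∈ Set.range ψ)
    (hRV : ∀ j a, Gd.Adj (Sum.inr j) (Sum.inl a) ↔ a ∈ Set.range ψ)
    (hRR : ∀ j j', ¬ Gd.Adj (Sum.inr j) (Sum.inr j'))
    (fd : V ⊕ Fin (2 * (k+2) - 2) → ℕ)
    (hfdl : ∀ v, fd (Sum.inl v) = (f v : ℕ) + (k+2))
    (hfdr : ∀ j : Fin (2 * (k+2) - 2),
      fd (Sum.inr j) = if (j : ℕ) ≤ (k+2) - 2 then (j : ℕ) + 1 else m + (j : ℕ) + 1) :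
    Fintype.card (V ⊕ Fin (2 * (k+2) - 2)) = m + 2 * (k+2) - 2 ∧
    IsRegularDeg Gd (2 * (k+2)) ∧
    Set.BijOn fd Set.univ (Set.Icc 1 (m + 2 * (k+2) - 2)) ∧
    (∀ u, wsum Gd fd u = 2 * (k+2) ^ 2 + m * (k+2) - (k+2)) := by
  have hm : 2*(k+2) ≤ m := by
    have h := Fintype.card_le_of_injective ψ hinj
    simpa [hV] using h
  have hfv : ∀ v : V, (f v : ℕ) < m := fun v => hV ▸ (f v).isLt
  -- label sum of G
  have hL : 2 * ∑ v : V, ((f v : ℕ)+1) = m*(m+1) := by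
    have h1 : ∑ v : V, ((f v : ℕ)+1) = ∑ i ∈ Finset.range (Fintype.card V), (i+1) := by
      rw [← Fin.sum_univ_eq_sum_range (fun i => i+1) (Fintype.card V)]
      exact Equiv.sum_comp f (fun i : Fin (Fintype.card V) => (i:ℕ)+1)
    rw [h1, hV]; exact gauss' m
  -- magic constant value
  have hc : c = (k+2) * (m+1) := by
    have hms : ∑ u : V, wsum G (fun v => (f v : ℕ)+1) u
        = (∑ v : V, ((f v:ℕ)+1)) * (2*(k+2)) := by
      unfold wsum
      calc ∑ u : V, ∑ v ∈ Finset.univ.filter (fun v => G.Adj u v), ((f v:ℕ)+1)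
          = ∑ u : V, ∑ v : V, if G.Adj u v then ((f v:ℕ)+1) else 0 := by
            simp [Finset.sum_filter]
        _ = ∑ v : V, ∑ u : V, if G.Adj u v then ((f v:ℕ)+1) else 0 := Finset.sum_comm
        _ = ∑ v : V, ((f v:ℕ)+1) * (2*(k+2)) := by
            refine Finset.sum_congr rfl (fun v _ => ?_)
            rw [← Finset.sum_filter, Finset.sum_const, smul_eq_mul]
            have he : Finset.univ.filter (fun u => G.Adj u v)
                = Finset.univ.filter (fun u => G.Adj v u) := by
              ext u; simp [SimpleGraph.adj_comm]
            rw [he, hreg v, Nat.mul_comm]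
        _ = (∑ v : V, ((f v:ℕ)+1)) * (2*(k+2)) := by rw [Finset.sum_mul]
    have hms2 : ∑ u : V, wsum G (fun v => (f v : ℕ)+1) u = m * c := by
      simp [hmagic, Finset.card_univ, hV, mul_comm]
    have key : 2*m*c = 2*m*((k+2)*(m+1)) := by
      calc 2*m*c = (∑ v : V, ((f v:ℕ)+1)) * (2*(k+2)) * 2 := by rw [← hms, hms2]; ring
        _ = (2 * ∑ v : V, ((f v:ℕ)+1)) * (2*(k+2)) := by ring
        _ = m*(m+1)*(2*(k+2)) := by rw [hL]
        _ = 2*m*((k+2)*(m+1)) := by ring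
    exact Nat.eq_of_mul_eq_mul_left (by omega) key
  -- the twin involution
  obtain ⟨τ, hτadd, hτinv⟩ : ∃ τ : Fin (2*(k+2)) → Fin (2*(k+2)),
      (∀ i : Fin (2*(k+2)), (i:ℕ) + (τ i:ℕ) = 2*(k+2)-1) ∧ Function.Involutive τ := by
    refine ⟨fun i => ⟨2*(k+2)-1-(i:ℕ), by omega⟩, fun i => ?_, fun i => ?_⟩
    · show (i:ℕ) + (2*(k+2)-1-(i:ℕ)) = 2*(k+2)-1
      have := i.isLt; omega
    · apply Fin.ext
      show 2*(k+2)-1-(2*(k+2)-1-(i:ℕ)) = (i:ℕ)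
      have := i.isLt; omega
  have hτne : ∀ i, i ≠ τ i := by
    intro i h
    have h2 := hτadd i
    rw [← h] at h2
    omega
  -- the H label sum
  have hP : ∑ i : Fin (2*(k+2)), ((f (ψ i):ℕ)+1) = (k+2)*(m+1) := by
    have hperm : ∑ i : Fin (2*(k+2)), ((f (ψ (τ i)):ℕ)+1)
        = ∑ i : Fin (2*(k+2)), ((f (ψ i):ℕ)+1) := by
      have h := Equiv.sum_comp (Function.Involutive.toPerm τ hτinv)
        (fun i => ((f (ψ i):ℕ)+1))
      simpa [Function.Involutive.coe_toPerm] using h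
    have h2 : 2 * ∑ i : Fin (2*(k+2)), ((f (ψ i):ℕ)+1) = 2*((k+2)*(m+1)) := by
      calc 2 * ∑ i : Fin (2*(k+2)), ((f (ψ i):ℕ)+1)
          = (∑ i : Fin (2*(k+2)), ((f (ψ i):ℕ)+1))
            + ∑ i : Fin (2*(k+2)), ((f (ψ (τ i)):ℕ)+1) := by rw [two_mul, hperm]
        _ = ∑ i : Fin (2*(k+2)), (((f (ψ i):ℕ)+1) + ((f (ψ (τ i)):ℕ)+1)) :=
            (Finset.sum_add_distrib).symm
        _ = ∑ _i : Fin (2*(k+2)), (m+1) :=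
            Finset.sum_congr rfl (fun i _ => htwin i (τ i) (hτadd i))
        _ = 2*((k+2)*(m+1)) := by
            rw [Finset.sum_const, Finset.card_univ, Fintype.card_fin, smul_eq_mul]; ring
    exact Nat.eq_of_mul_eq_mul_left (by norm_num) h2
  -- new labels sum
  have hU : ∑ j : Fin (2*(k+2)-2),
      (if (j:ℕ) ≤ (k+2)-2 then (j:ℕ)+1 else m+(j:ℕ)+1) = (k+1)*(m+2*k+3) := by
    rw [Fin.sum_univ_eq_sum_range (fun j => if j ≤ (k+2)-2 then j+1 else m+j+1) (2*(k+2)-2)]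
    have e1 : 2*(k+2)-2 = (k+1)+(k+1) := by omega
    rw [e1, Finset.sum_range_add]
    have hA : ∑ j ∈ Finset.range (k+1), (if j ≤ (k+2)-2 then j+1 else m+j+1)
        = ∑ j ∈ Finset.range (k+1), (j+1) := by
      refine Finset.sum_congr rfl (fun j hj => ?_)
      rw [Finset.mem_range] at hj
      rw [if_pos (by omega)]
    have hB : ∑ j ∈ Finset.range (k+1),
        (if (k+1)+j ≤ (k+2)-2 then (k+1)+j+1 else m+((k+1)+j)+1)
        = (k+1)*(m+k+2) + ∑ j ∈ Finset.range (k+1), j := by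
      have hB1 : ∀ j ∈ Finset.range (k+1),
          (if (k+1)+j ≤ (k+2)-2 then (k+1)+j+1 else m+((k+1)+j)+1) = (m+k+2)+j := by
        intro j _
        rw [if_neg (by omega)]
        omega
      rw [Finset.sum_congr rfl hB1, Finset.sum_add_distrib, Finset.sum_const,
        Finset.card_range, smul_eq_mul]
    rw [hA, hB]
    have g1 := gauss' (k+1)
    have g2 := Finset.sum_range_id_mul_two (k+1)
    have h2 : 2 * ((∑ j ∈ Finset.range (k+1), (j+1))
        + ((k+1)*(m+k+2) + ∑ j ∈ Finset.range (k+1), j)) = 2*((k+1)*(m+2*k+3)) := by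
      calc 2 * ((∑ j ∈ Finset.range (k+1), (j+1))
            + ((k+1)*(m+k+2) + ∑ j ∈ Finset.range (k+1), j))
          = 2 * (∑ j ∈ Finset.range (k+1), (j+1)) + 2*((k+1)*(m+k+2))
            + (∑ j ∈ Finset.range (k+1), j) * 2 := by ring
        _ = (k+1)*(k+2) + 2*((k+1)*(m+k+2)) + (k+1)*((k+1)-1) := by rw [g1, g2]
        _ = 2*((k+1)*(m+2*k+3)) := by simp only [Nat.add_sub_cancel]; ring
    exact Nat.eq_of_mul_eq_mul_left (by norm_num) h2
  -- splitting sums over the sum type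
  have hsplit : ∀ (g : V ⊕ Fin (2*(k+2)-2) → ℕ) (u),
      (∑ x ∈ Finset.univ.filter (fun x => Gd.Adj u x), g x)
      = (∑ v : V, if Gd.Adj u (Sum.inl v) then g (Sum.inl v) else 0)
        + (∑ j : Fin (2*(k+2)-2), if Gd.Adj u (Sum.inr j) then g (Sum.inr j) else 0) :=
    fun g u => by rw [Finset.sum_filter, Fintype.sum_sum_type]
  have hsumT : ∀ (h : V → ℕ),
      (∑ v : V, if v ∈ Set.range ψ then h v else 0) = ∑ i : Fin (2*(k+2)), h (ψ i) := by
    intro h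
    have h1 : ∀ v : V, (if v ∈ Set.range ψ then h v else 0)
        = (if v ∈ Finset.image ψ Finset.univ then h v else 0) := by
      intro v
      refine if_congr ?_ rfl rfl
      simp [Set.mem_range]
    rw [Finset.sum_congr rfl (fun v _ => h1 v), Finset.sum_ite_mem, Finset.univ_inter,
      Finset.sum_image (fun a _ b _ hab => hinj hab)]
  -- the three neighborhood computations
  have caseR : ∀ (g : V ⊕ Fin (2*(k+2)-2) → ℕ) (j : Fin (2*(k+2)-2)),
      (∑ x ∈ Finset.univ.filter (fun x => Gd.Adj (Sum.inr j) x), g x)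
      = ∑ i : Fin (2*(k+2)), g (Sum.inl (ψ i)) := by
    intro g j
    rw [hsplit]
    have h1 : (∑ v : V, if Gd.Adj (Sum.inr j) (Sum.inl v) then g (Sum.inl v) else 0)
        = ∑ i : Fin (2*(k+2)), g (Sum.inl (ψ i)) := by
      have h0 : ∀ v : V, (if Gd.Adj (Sum.inr j) (Sum.inl v) then g (Sum.inl v) else 0)
          = (if v ∈ Set.range ψ then g (Sum.inl v) else 0) :=
        fun v => if_congr (hRV j v) rfl rfl
      rw [Finset.sum_congr rfl (fun v _ => h0 v)]
      exact hsumT (fun v => g (Sum.inl v))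
    have h2 : (∑ j' : Fin (2*(k+2)-2),
        if Gd.Adj (Sum.inr j) (Sum.inr j') then g (Sum.inr j') else 0) = 0 :=
      Finset.sum_eq_zero (fun j' _ => if_neg (hRR j j'))
    rw [h1, h2, add_zero]
  have caseVout : ∀ (g : V ⊕ Fin (2*(k+2)-2) → ℕ) (a : V), a ∉ Set.range ψ →
      (∑ x ∈ Finset.univ.filter (fun x => Gd.Adj (Sum.inl a) x), g x)
      = ∑ v ∈ Finset.univ.filter (fun v => G.Adj a v), g (Sum.inl v) := by
    intro g a ha
    rw [hsplit]
    have h2 : (∑ j : Fin (2*(k+2)-2),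
        if Gd.Adj (Sum.inl a) (Sum.inr j) then g (Sum.inr j) else 0) = 0 :=
      Finset.sum_eq_zero (fun j _ => if_neg (fun hc => ha ((hVR a j).mp hc)))
    have h1 : (∑ v : V, if Gd.Adj (Sum.inl a) (Sum.inl v) then g (Sum.inl v) else 0)
        = ∑ v : V, if G.Adj a v then g (Sum.inl v) else 0 := by
      refine Finset.sum_congr rfl fun v _ => if_congr ?_ rfl rfl
      rw [hVV]
      exact ⟨fun h => h.1, fun h => ⟨h, fun hc => ha hc.1⟩⟩
    rw [h1, h2, add_zero, Finset.sum_filter]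
  have caseVin : ∀ (g : V ⊕ Fin (2*(k+2)-2) → ℕ) (i : Fin (2*(k+2))),
      (∑ x ∈ Finset.univ.filter (fun x => Gd.Adj (Sum.inl (ψ i)) x), g x)
        + (∑ j : Fin (2*(k+2)), if G.Adj (ψ i) (ψ j) then g (Sum.inl (ψ j)) else 0)
      = (∑ v ∈ Finset.univ.filter (fun v => G.Adj (ψ i) v), g (Sum.inl v))
        + ∑ j : Fin (2*(k+2)-2), g (Sum.inr j) := by
    intro g i
    rw [hsplit]
    have hmem : ψ i ∈ Set.range ψ := ⟨i, rfl⟩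
    have h2 : (∑ j : Fin (2*(k+2)-2),
        if Gd.Adj (Sum.inl (ψ i)) (Sum.inr j) then g (Sum.inr j) else 0)
        = ∑ j : Fin (2*(k+2)-2), g (Sum.inr j) :=
      Finset.sum_congr rfl (fun j _ => if_pos ((hVR _ j).mpr hmem))
    have h1 : (∑ v : V, if Gd.Adj (Sum.inl (ψ i)) (Sum.inl v) then g (Sum.inl v) else 0)
        = ∑ v : V, if G.Adj (ψ i) v ∧ v ∉ Set.range ψ then g (Sum.inl v) else 0 := by
      refine Finset.sum_congr rfl fun v _ => if_congr ?_ rfl rfl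
      rw [hVV]
      constructor
      · rintro ⟨hA, hB⟩; exact ⟨hA, fun hc => hB ⟨hmem, hc⟩⟩
      · rintro ⟨hA, hB⟩; exact ⟨hA, fun hc => hB hc.2⟩
    have h3 : (∑ j : Fin (2*(k+2)), if G.Adj (ψ i) (ψ j) then g (Sum.inl (ψ j)) else 0)
        = ∑ v : V, if G.Adj (ψ i) v ∧ v ∈ Set.range ψ then g (Sum.inl v) else 0 := by
      have h0 : ∀ v : V, (if G.Adj (ψ i) v ∧ v ∈ Set.range ψ then g (Sum.inl v) else 0)
          = (if v ∈ Set.range ψ then (if G.Adj (ψ i) v then g (Sum.inl v) else 0) else 0) := by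
        intro v
        by_cases hA : G.Adj (ψ i) v <;> by_cases hB : v ∈ Set.range ψ <;> simp [hA, hB]
      rw [Finset.sum_congr rfl (fun v _ => h0 v),
        hsumT (fun v => if G.Adj (ψ i) v then g (Sum.inl v) else 0)]
    have h4 : (∑ v : V, if G.Adj (ψ i) v ∧ v ∉ Set.range ψ then g (Sum.inl v) else 0)
        + (∑ v : V, if G.Adj (ψ i) v ∧ v ∈ Set.range ψ then g (Sum.inl v) else 0)
        = ∑ v : V, if G.Adj (ψ i) v then g (Sum.inl v) else 0 := by
      rw [← Finset.sum_add_distrib]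
      refine Finset.sum_congr rfl fun v _ => ?_
      by_cases hA : G.Adj (ψ i) v <;> by_cases hB : v ∈ Set.range ψ <;> simp [hA, hB]
    rw [h1, h2, h3, Finset.sum_filter]
    omega
  -- the pair complement
  have hfilterpair : ∀ i : Fin (2*(k+2)),
      Finset.univ.filter (fun j => ¬ G.Adj (ψ i) (ψ j)) = {i, τ i} := by
    intro i
    ext j
    simp only [Finset.mem_filter, Finset.mem_univ, true_and, Finset.mem_insert,
      Finset.mem_singleton]
    constructor
    · intro hnadj
      by_contra hcon
      push_neg at hcon
      obtain ⟨hji, hjτ⟩ := hcon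
      apply hnadj
      rw [hsub i j (fun h => hji h.symm)]
      intro habs
      apply hjτ
      apply Fin.ext
      have := hτadd i
      omega
    · rintro (rfl | rfl)
      · exact fun h => (G.irrefl h)
      · intro h
        rw [hsub i (τ i) (hτne i)] at h
        exact h (hτadd i)
  have hXpair : ∀ (g : V ⊕ Fin (2*(k+2)-2) → ℕ) (i : Fin (2*(k+2))),
      (∑ j : Fin (2*(k+2)), if G.Adj (ψ i) (ψ j) then g (Sum.inl (ψ j)) else 0)
        + (g (Sum.inl (ψ i)) + g (Sum.inl (ψ (τ i))))
      = ∑ j : Fin (2*(k+2)), g (Sum.inl (ψ j)) := by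
    intro g i
    have hnot : (∑ j : Fin (2*(k+2)),
        if ¬ G.Adj (ψ i) (ψ j) then g (Sum.inl (ψ j)) else 0)
        = g (Sum.inl (ψ i)) + g (Sum.inl (ψ (τ i))) := by
      rw [← Finset.sum_filter, hfilterpair i, Finset.sum_pair (hτne i)]
    rw [← hnot, ← Finset.sum_add_distrib]
    refine Finset.sum_congr rfl fun j _ => ?_
    by_cases h : G.Adj (ψ i) (ψ j) <;> simp [h]
  -- numeric evaluations
  have hNsum : ∀ a : V, (∑ v ∈ Finset.univ.filter (fun v => G.Adj a v), fd (Sum.inl v))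
      = (k+2)*(m+1) + 2*(k+2)*(k+1) := by
    intro a
    have h0 : ∀ v : V, fd (Sum.inl v) = ((f v:ℕ)+1) + (k+1) := fun v => by rw [hfdl]; omega
    rw [Finset.sum_congr rfl (fun v _ => h0 v), Finset.sum_add_distrib, Finset.sum_const,
      hreg a, smul_eq_mul]
    have hw := hmagic a
    unfold wsum at hw
    rw [hw, hc]
  have hTsum : (∑ i : Fin (2*(k+2)), fd (Sum.inl (ψ i))) = (k+2)*(m+1) + 2*(k+2)*(k+1) := by
    have h0 : ∀ i : Fin (2*(k+2)), fd (Sum.inl (ψ i)) = ((f (ψ i):ℕ)+1) + (k+1) :=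
      fun i => by rw [hfdl]; omega
    rw [Finset.sum_congr rfl (fun i _ => h0 i), Finset.sum_add_distrib, Finset.sum_const,
      Finset.card_univ, Fintype.card_fin, smul_eq_mul, hP]
  have hUval : (∑ j : Fin (2*(k+2)-2), fd (Sum.inr j)) = (k+1)*(m+2*k+3) := by
    rw [Finset.sum_congr rfl (fun j _ => hfdr j)]
    exact hU
  have hpairval : ∀ i : Fin (2*(k+2)),
      fd (Sum.inl (ψ i)) + fd (Sum.inl (ψ (τ i))) = m + 2*k + 3 := by
    intro i
    rw [hfdl, hfdl]
    have := htwin i (τ i) (hτadd i)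
    omega
  refine ⟨?_, ?_, ?_, ?_⟩
  · simp only [Fintype.card_sum, hV, Fintype.card_fin]
    omega
  · -- regularity
    intro u
    rcases u with a | j
    · by_cases ha : a ∈ Set.range ψ
      · obtain ⟨i, rfl⟩ := ha
        have h1 := caseVin (fun _ => 1) i
        have h2 := hXpair (fun _ => 1) i
        simp only [Finset.sum_const, Finset.card_univ, Fintype.card_fin, smul_eq_mul,
          mul_one] at h1 h2
        rw [hreg (ψ i)] at h1
        omega
      · rw [Finset.card_eq_sum_ones, caseVout (fun _ => 1) a ha, ← Finset.card_eq_sum_ones]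
        exact hreg a
    · rw [Finset.card_eq_sum_ones, caseR (fun _ => 1) j]
      simp
  · -- bijectivity
    refine ⟨fun x _ => ?_, fun x _ y _ hxy => ?_, fun t ht => ?_⟩
    · rcases x with v | j
      · rw [hfdl]
        have := hfv v
        simp only [Set.mem_Icc]
        omega
      · rw [hfdr]
        have := j.isLt
        simp only [Set.mem_Icc]
        split_ifs <;> omega
    · rcases x with v | j <;> rcases y with w | j'
      · rw [hfdl, hfdl] at hxy
        exact congrArg Sum.inl (f.injective (Fin.val_injective (by omega)))
      · exfalso
        rw [hfdl, hfdr] at hxy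
        have := hfv v
        have := j'.isLt
        split_ifs at hxy <;> omega
      · exfalso
        rw [hfdr, hfdl] at hxy
        have := hfv w
        have := j.isLt
        split_ifs at hxy <;> omega
      · rw [hfdr, hfdr] at hxy
        refine congrArg Sum.inr (Fin.ext ?_)
        split_ifs at hxy <;> omega
    · simp only [Set.mem_Icc] at ht
      obtain ⟨ht1, ht2⟩ := ht
      by_cases h1 : t ≤ k+1
      · refine ⟨Sum.inr ⟨t-1, by omega⟩, Set.mem_univ _, ?_⟩
        rw [hfdr]
        show (if t-1 ≤ (k+2)-2 then (t-1)+1 else m+(t-1)+1) = t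
        rw [if_pos (by omega)]
        omega
      · by_cases h2 : t ≤ m + k + 1
        · refine ⟨Sum.inl (f.symm ⟨t - (k+2), by rw [hV]; omega⟩), Set.mem_univ _, ?_⟩
          rw [hfdl, Equiv.apply_symm_apply]
          show (t - (k+2)) + (k+2) = t
          omega
        · refine ⟨Sum.inr ⟨t - m - 1, by omega⟩, Set.mem_univ _, ?_⟩
          rw [hfdr]
          show (if t-m-1 ≤ (k+2)-2 then (t-m-1)+1 else m+(t-m-1)+1) = t
          rw [if_neg (by omega)]
          omega
  · -- the weights
    intro u
    unfold wsum
    rcases u with a | j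
    · by_cases ha : a ∈ Set.range ψ
      · obtain ⟨i, rfl⟩ := ha
        have h1 := caseVin fd i
        have h2 := hXpair fd i
        rw [hTsum, hpairval i] at h2
        rw [hNsum (ψ i), hUval, ← h2] at h1
        have hgoal : 2*(k+2)^2 + m*(k+2) - (k+2) = (m+2*k+3) + (k+1)*(m+2*k+3) :=
          Nat.sub_eq_of_eq_add (by ring)
        rw [hgoal]
        linarith [h1]
      · rw [caseVout fd a ha, hNsum a]
        exact (Nat.sub_eq_of_eq_add (by ring)).symm
    · rw [caseR fd j, hTsum]
      exact (Nat.sub_eq_of_eq_add (by ring)).symm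

/-- the replacement construction on a 2n-regular distance magic graph
containing K_{2n} minus a perfect matching with twin label-sums m+1. -/
theorem replacement_construction {V : Type*} [Fintype V] (n m : ℕ) (hn : 2 ≤ n)
    (hV : Fintype.card V = m) (G : SimpleGraph V) (hreg : IsRegularDeg G (2 * n))
    (f : V ≃ Fin (Fintype.card V)) (c : ℕ)
    (hmagic : ∀ u, wsum G (fun v => (f v : ℕ) + 1) u = c)
    (ψ : Fin (2 * n) → V) (hinj : Function.Injective ψ)
    (hsub : ∀ i j : Fin (2 * n), i ≠ j →
      (G.Adj (ψ i) (ψ j) ↔ (i : ℕ) + (j : ℕ) ≠ 2 * n - 1))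
    (htwin : ∀ i j : Fin (2 * n), (i : ℕ) + (j : ℕ) = 2 * n - 1 →
      ((f (ψ i) : ℕ) + 1) + ((f (ψ j) : ℕ) + 1) = m + 1) :
    letI Gd : SimpleGraph (V ⊕ Fin (2 * n - 2)) := SimpleGraph.fromRel (fun x y =>
      match x, y with
      | Sum.inl a, Sum.inl b => G.Adj a b ∧ ¬(a ∈ Set.range ψ ∧ b ∈ Set.range ψ)
      | Sum.inl a, Sum.inr _ => a ∈ Set.range ψ
      | Sum.inr _, _ => False)
    letI fd : V ⊕ Fin (2 * n - 2) → ℕ := fun x =>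
      match x with
      | Sum.inl v => (f v : ℕ) + n
      | Sum.inr j => if (j : ℕ) ≤ n - 2 then (j : ℕ) + 1 else m + (j : ℕ) + 1
    Fintype.card (V ⊕ Fin (2 * n - 2)) = m + 2 * n - 2 ∧
    IsRegularDeg Gd (2 * n) ∧
    Set.BijOn fd Set.univ (Set.Icc 1 (m + 2 * n - 2)) ∧
    (∀ u, wsum Gd fd u = 2 * n ^ 2 + m * n - n) := by
  obtain ⟨k, rfl⟩ : ∃ k, n = k + 2 := ⟨n - 2, by omega⟩
  refine auxmain k m hV G hreg f c hmagic ψ hinj hsub htwin _ ?_ ?_ ?_ ?_ _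
    (fun v => rfl) (fun j => rfl)
  · intro a b
    rw [SimpleGraph.fromRel_adj]
    constructor
    · rintro ⟨-, h | h⟩
      · exact h
      · exact ⟨h.1.symm, fun hc => h.2 ⟨hc.2, hc.1⟩⟩
    · intro h
      exact ⟨fun he => (G.ne_of_adj h.1) (Sum.inl.inj he), Or.inl h⟩
  · intro a j
    rw [SimpleGraph.fromRel_adj]
    constructor
    · rintro ⟨-, h | h⟩
      · exact h
      · exact h.elim
    · intro h
      exact ⟨Sum.inl_ne_inr, Or.inl h⟩
  · intro j a
    rw [SimpleGraph.fromRel_adj]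
    constructor
    · rintro ⟨-, h | h⟩
      · exact h.elim
      · exact h
    · intro h
      exact ⟨Sum.inr_ne_inl, Or.inr h⟩
  · intro j j'
    rw [SimpleGraph.fromRel_adj]
    rintro ⟨-, h | h⟩ <;> exact h
end

section
/- For every n ≥ 3 odd, the lexicographic product G ∘ C_4 is not distance magic, where G = (K_{n−1} − M) + K_1 (the join of K_1 with K_{n−1} minus a perfect matching M). -/
open scoped Classical
open Finset

private lemma modval' {q x : ℕ} (h1 : x < 2*q) : x % q = if x < q then x else x - q := by
  split
  · exact Nat.mod_eq_of_lt (by assumption)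
  · rw [Nat.mod_eq_sub_mod (by omega)]; exact Nat.mod_eq_of_lt (by omega)

private lemma msym1 {q h a b : ℕ} (hq : 2*h = q) (ha : a < q) (hb : b < q)
    (hab : (a+h)%q = b) : (b+h)%q = a := by
  have h1 : (a+h) % q = if a + h < q then a+h else a+h-q := modval' (by omega)
  have h2 : (b+h) % q = if b + h < q then b+h else b+h-q := modval' (by omega)
  rw [h2]; rw [h1] at hab
  split at hab <;> split <;> omega

private lemma mne {q h a : ℕ} (hq : 2*h = q) (hh : 0 < h) (ha : a < q) : (a+h)%q ≠ a := by
  have h1 : (a+h) % q = if a + h < q then a+h else a+h-q := modval' (by omega)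
  rw [h1]; split <;> omega

private lemma wsum_lexProd {α β : Type*} [Fintype α] [Fintype β]
    (G : SimpleGraph α) (H : SimpleGraph β) (L : α × β → ℕ) (g : α) (h : β) :
    wsum (lexProd G H) L (g,h)
      = (∑ g' ∈ univ.filter (fun g' => G.Adj g g'), ∑ h', L (g',h'))
        + ∑ h' ∈ univ.filter (fun h' => H.Adj h h'), L (g,h') := by
  classical
  unfold wsum
  rw [Finset.sum_filter, Fintype.sum_prod_type]
  have key : ∀ g' : α,
      (∑ h' : β, if (lexProd G H).Adj (g,h) (g',h') then L (g',h') else 0)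
      = (if G.Adj g g' then ∑ h', L (g',h') else 0)
        + (if g = g' then ∑ h', if H.Adj h h' then L (g,h') else 0 else 0) := by
    intro g'
    by_cases he : g = g'
    · subst he
      simp [lexProd, G.irrefl]
    · by_cases hadj : G.Adj g g'
      · simp [lexProd, he, hadj]
      · simp [lexProd, he, hadj]
  rw [Finset.sum_congr rfl (fun g' _ => key g'), Finset.sum_add_distrib]
  rw [Finset.sum_ite_eq univ g (fun _ => ∑ h', if H.Adj h h' then L (g,h') else 0) ]
  simp [Finset.sum_filter]

private lemma circ4_adj (i j : Fin 4) :
    (circulant 4 1).Adj i j ↔ (((i:ℕ)+1)%4 = j ∨ ((j:ℕ)+1)%4 = i) := by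
  unfold circulant
  rw [SimpleGraph.fromRel_adj]
  constructor
  · rintro ⟨hne, (⟨k,hk1,hk2,h⟩|⟨k,hk1,hk2,h⟩)⟩
    · left; have : k = 1 := by omega
      omega
    · right; have : k = 1 := by omega
      omega
  · intro hor
    have hi := i.isLt; have hj := j.isLt
    refine ⟨fun e => ?_, ?_⟩
    · subst e; omega
    · rcases hor with h|h
      · exact Or.inl ⟨1, le_refl 1, le_refl 1, h⟩
      · exact Or.inr ⟨1, le_refl 1, le_refl 1, h⟩

private lemma filtC4 (h : Fin 4) :
    (univ.filter (fun v => (circulant 4 1).Adj h v)) = if (h:ℕ) % 2 = 0 then {1,3} else {0,2} := by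
  fin_cases h <;> · ext v; fin_cases v <;> simp [circ4_adj] <;> decide

private lemma calG_adj {n : ℕ} (hn : 3 ≤ n) (hodd : Odd n) (i j : Fin n) :
    (calG n).Adj i j ↔
      i ≠ j ∧ ((i:ℕ) = 0 ∨ (j:ℕ) = 0 ∨ ¬ (((i:ℕ)-1+(n-1)/2) % (n-1) = (j:ℕ)-1)) := by
  have h2 : 2 * ((n-1)/2) = n - 1 := by
    have := Nat.odd_iff.mp hodd; omega
  have hi := i.isLt; have hj := j.isLt
  unfold calG
  rw [SimpleGraph.fromRel_adj]
  constructor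
  · rintro ⟨hne, (h|h)⟩
    · exact ⟨hne, h⟩
    · refine ⟨hne, ?_⟩
      by_cases hi0 : (i:ℕ) = 0
      · exact Or.inl hi0
      by_cases hj0 : (j:ℕ) = 0
      · exact Or.inr (Or.inl hj0)
      rcases h with h|h|h
      · exact Or.inr (Or.inl h)
      · exact Or.inl h
      · refine Or.inr (Or.inr fun hm => h ?_)
        exact msym1 h2 (by omega) (by omega) hm
  · rintro ⟨hne, h⟩
    exact ⟨hne, Or.inl h⟩

private lemma filt0' : (univ.filter (fun v => (circulant 4 1).Adj (0:Fin 4) v)) = {1,3} := by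
  have := filtC4 0; simpa using this

private lemma filt1' : (univ.filter (fun v => (circulant 4 1).Adj (1:Fin 4) v)) = {0,2} := by
  have := filtC4 1; simpa using this

/-- ((K_{n-1} - M) + K_1) ∘ C_4 is not distance magic (n odd, n ≥ 3). -/
theorem calG_lex_C4_not_distance_magic (n : ℕ) (hn : 3 ≤ n) (hodd : Odd n) :
    ¬ IsDistanceMagic (lexProd (calG n) (circulant 4 1)) := by
  haveI : NeZero n := ⟨by omega⟩
  have h2 : 2 * ((n-1)/2) = n - 1 := by
    have := Nat.odd_iff.mp hodd; omega
  rintro ⟨f, c, hc⟩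
  have hN : Fintype.card (Fin n × Fin 4) = 4 * n := by
    rw [Fintype.card_prod, Fintype.card_fin, Fintype.card_fin]; ring
  set L : Fin n × Fin 4 → ℕ := fun v => (f v : ℕ) + 1 with hL
  set P : Fin n → ℕ := fun g => ∑ h' : Fin 4, L (g, h') with hPdef
  set t : Fin n → ℕ := fun g => L (g,0) + L (g,2) with htdef
  set s : Fin n → ℕ := fun g => L (g,1) + L (g,3) with hsdef
  set SG : Fin n → ℕ := fun g => ∑ g' ∈ univ.filter (fun g' => (calG n).Adj g g'), P g'
    with hSGdef
  -- weights
  have hw : ∀ (g : Fin n) (h : Fin 4),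
      SG g + ∑ h' ∈ univ.filter (fun h' => (circulant 4 1).Adj h h'), L (g,h') = c := by
    intro g h
    have hwl := wsum_lexProd (calG n) (circulant 4 1) L g h
    have hcu := hc (g, h)
    rw [hwl] at hcu
    exact hcu
  have hw0 : ∀ g, SG g + s g = c := by
    intro g
    have h := hw g 0
    rw [filt0', Finset.sum_pair (by decide : (1:Fin 4) ≠ 3)] at h
    exact h
  have hw1 : ∀ g, SG g + t g = c := by
    intro g
    have h := hw g 1
    rw [filt1', Finset.sum_pair (by decide : (0:Fin 4) ≠ 2)] at h
    exact h
  have hts : ∀ g, s g = t g := by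
    intro g; have := hw0 g; have := hw1 g; omega
  have hP2 : ∀ g, P g = 2 * t g := by
    intro g
    have h := hts g
    simp only [hPdef, htdef, hsdef, Fin.sum_univ_four] at h ⊢
    omega
  -- total
  set T : ℕ := ∑ g, P g with hTdef
  have hT : 2 * T = (4*n) * (4*n + 1) := by
    have h1 : T = ∑ v : Fin n × Fin 4, L v := by
      rw [hTdef, ← Fintype.sum_prod_type]
    have h2' : ∑ v : Fin n × Fin 4, L v
        = ∑ i : Fin (Fintype.card (Fin n × Fin 4)), ((i:ℕ) + 1) := by
      rw [hL]
      exact Equiv.sum_comp f (fun i => (i:ℕ) + 1)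
    have h3 : ∑ i : Fin (Fintype.card (Fin n × Fin 4)), ((i:ℕ) + 1)
        = (∑ i ∈ Finset.range (4*n), i) + 4*n := by
      rw [Fin.sum_univ_eq_sum_range (fun i => i + 1), hN, Finset.sum_add_distrib]
      simp
    have h4 := Finset.sum_range_id_mul_two (4*n)
    obtain ⟨m, hm⟩ : ∃ m, 4*n = m + 1 := ⟨4*n - 1, by omega⟩
    rw [h1, h2', h3]
    rw [hm] at h4 ⊢
    simp only [Nat.add_sub_cancel] at h4
    nlinarith [h4]
  -- the mate
  have hq1 : 0 < n - 1 := by omega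
  set M : Fin n → Fin n := fun g =>
    ⟨((g:ℕ)-1+(n-1)/2) % (n-1) + 1, by have := Nat.mod_lt ((g:ℕ)-1+(n-1)/2) hq1; omega⟩
    with hMdef
  have hMval : ∀ g : Fin n, (M g : ℕ) = ((g:ℕ)-1+(n-1)/2) % (n-1) + 1 := fun g => rfl
  have hM0 : ∀ g, (M g : ℕ) ≠ 0 := by intro g; rw [hMval]; omega
  have hMne : ∀ g : Fin n, (g:ℕ) ≠ 0 → M g ≠ g := by
    intro g hg he
    have h1 : (M g : ℕ) = (g:ℕ) := by rw [he]
    rw [hMval] at h1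
    have hb : (g:ℕ) - 1 < n - 1 := by have := g.isLt; omega
    have := mne h2 (by omega) hb
    omega
  have hMM : ∀ g : Fin n, (g:ℕ) ≠ 0 → M (M g) = g := by
    intro g hg
    apply Fin.ext
    rw [hMval, hMval]
    simp only [Nat.add_sub_cancel]
    have hb : (g:ℕ) - 1 < n - 1 := by have := g.isLt; omega
    have hb2 : ((g:ℕ)-1+(n-1)/2) % (n-1) < n - 1 := Nat.mod_lt _ hq1
    have := msym1 h2 hb hb2 rfl
    omega
  -- filters for calG
  have filter0 : univ.filter (fun j => (calG n).Adj 0 j) = univ.erase 0 := by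
    ext j
    simp only [mem_filter, mem_univ, true_and, mem_erase, and_true,
      calG_adj hn hodd]
    constructor
    · rintro ⟨hne, -⟩; exact hne.symm
    · intro hne; exact ⟨hne.symm, Or.inl (Fin.val_zero n)⟩
  have filterg : ∀ g : Fin n, (g:ℕ) ≠ 0 →
      univ.filter (fun j => (calG n).Adj g j) = (univ.erase g).erase (M g) := by
    intro g hg
    ext j
    simp only [mem_filter, mem_univ, true_and, mem_erase, and_true,
      calG_adj hn hodd]
    have hbg : (g:ℕ) - 1 < n - 1 := by have := g.isLt; omega
    constructor
    · rintro ⟨hne, (h|h|h)⟩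
      · exact absurd h hg
      · refine ⟨fun he => ?_, hne.symm⟩
        rw [he, hMval] at h; omega
      · refine ⟨fun he => ?_, hne.symm⟩
        apply h
        rw [he, hMval]; omega
    · rintro ⟨hjM, hjg⟩
      refine ⟨hjg.symm, ?_⟩
      by_cases hj0 : (j:ℕ) = 0
      · exact Or.inr (Or.inl hj0)
      · refine Or.inr (Or.inr fun hm => hjM ?_)
        apply Fin.ext
        rw [hMval]
        omega
  -- neighborhood sums
  have hSG0 : SG 0 + P 0 = T := by
    show (∑ g' ∈ univ.filter (fun j => (calG n).Adj 0 j), P g') + P 0 = T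
    rw [filter0, hTdef]
    exact Finset.sum_erase_add univ P (mem_univ 0)
  have hSGg : ∀ g : Fin n, (g:ℕ) ≠ 0 → SG g + P (M g) + P g = T := by
    intro g hg
    show (∑ g' ∈ univ.filter (fun j => (calG n).Adj g j), P g') + P (M g) + P g = T
    rw [filterg g hg, hTdef]
    have h1 : M g ∈ univ.erase g := by
      rw [mem_erase]; exact ⟨hMne g hg, mem_univ _⟩
    rw [Finset.sum_erase_add (univ.erase g) P h1]
    exact Finset.sum_erase_add univ P (mem_univ g)
  -- main equations
  have E0 : c + t 0 = T := by
    have := hw0 0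
    have := hSG0
    have := hP2 0
    have := hts 0
    omega
  have Eg : ∀ g : Fin n, (g:ℕ) ≠ 0 → c + t g + 2 * t (M g) = T := by
    intro g hg
    have := hw0 g
    have := hSGg g hg
    have := hP2 g
    have := hP2 (M g)
    have := hts g
    omega
  have Eg3 : ∀ g : Fin n, (g:ℕ) ≠ 0 → 3 * t g = t 0 := by
    intro g hg
    have e1 := Eg g hg
    have e2 := Eg (M g) (hM0 g)
    rw [hMM g hg] at e2
    have := E0
    omega
  -- summation
  have hsum : 3 * T = 6 * t 0 + (n - 1) * (2 * t 0) := by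
    have h1 : ∀ g ∈ univ.erase (0 : Fin n), 3 * P g = 2 * t 0 := by
      intro g hg
      rw [mem_erase] at hg
      have hg0 : (g:ℕ) ≠ 0 := fun h => hg.1 (Fin.ext (h.trans (Fin.val_zero n).symm))
      have := Eg3 g hg0
      have := hP2 g
      omega
    have h2' : (∑ g ∈ univ.erase (0:Fin n), 3 * P g) + 3 * P 0 = ∑ g : Fin n, 3 * P g :=
      Finset.sum_erase_add univ _ (mem_univ 0)
    have h3 : ∑ g ∈ univ.erase (0:Fin n), 3 * P g = (n-1) * (2 * t 0) := by
      rw [Finset.sum_congr rfl h1, Finset.sum_const,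
        Finset.card_erase_of_mem (mem_univ _), Finset.card_univ, Fintype.card_fin,
        smul_eq_mul]
    have h4 : ∑ g : Fin n, 3 * P g = 3 * T := by rw [hTdef, Finset.mul_sum]
    have h5 := hP2 0
    linarith
  -- bound on t 0
  have hbound : t 0 ≤ 8 * n - 1 := by
    have hne : f (0,0) ≠ f (0,2) := by
      intro h
      have h' := f.injective h
      have h'' : (0 : Fin 4) = 2 := congrArg Prod.snd h'
      exact absurd h'' (by decide)
    have h1 : (f (0,0) : ℕ) < Fintype.card (Fin n × Fin 4) := (f (0,0)).isLt
    have h2' : (f (0,2) : ℕ) < Fintype.card (Fin n × Fin 4) := (f (0,2)).isLt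
    have h3 : (f (0,0) : ℕ) ≠ (f (0,2) : ℕ) := fun h => hne (Fin.ext h)
    have h4 : t 0 = ((f (0,0) : ℕ) + 1) + ((f (0,2) : ℕ) + 1) := rfl
    omega
  -- contradiction
  obtain ⟨m, rfl⟩ : ∃ m, n = m + 3 := ⟨n - 3, by omega⟩
  have e : m + 3 - 1 = m + 2 := by omega
  rw [e] at hsum
  have hb' : t 0 ≤ 8 * m + 23 := by omega
  nlinarith [hsum, hT, hb', Nat.mul_le_mul_left (4*m+20) hb', sq_nonneg m]
end
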